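/- Let ζ > 0, k ≥ 1, s ∈ ℝ, c_0, …, c_{k−1} ∈ ℝ, let (ω_n) be a sequence of nonzero real numbers, and define s_n = s + ω_n·Σ_{j=0}^{k−1} c_j/( (n+ζ)_j ), where (x)_m = x(x+1)⋯(x+m−1) is the Pochhammer symbol (with (x)_0 = 1). Then for every n such that Σ_{j=0}^k (−1)^j C(k,j) ((ζ+n+j)_{k−1}/(ζ+n+k)_{k−1}) / ω_{n+j} ≠ 0, the factorial-series transformation is exact: S_k^{(n)}(ζ, s_n, ω_n) = s. -/

import Mathlib

open Polynomial Finset fwdDiff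

lemma fwdDiff_poly_eval (p : ℝ[X]) :
    Δ_[(1:ℝ)] (fun y => p.eval y) = fun y => (p.comp (X + C 1) - p).eval y := by
  funext y
  simp [fwdDiff, eval_comp]

lemma degree_comp_sub_lt (p : ℝ[X]) (hp : p ≠ 0) :
    (p.comp (X + C 1) - p).degree < p.degree := by
  have hnd : (X + C (1:ℝ)).natDegree = 1 := natDegree_X_add_C 1
  have hlc : (p.comp (X + C 1)).leadingCoeff = p.leadingCoeff := by
    rw [Polynomial.leadingCoeff_comp (by rw [hnd]; exact one_ne_zero)]
    rw [(monic_X_add_C (1:ℝ)).leadingCoeff, one_pow, mul_one]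
  have hc0 : p.comp (X + C 1) ≠ 0 := by
    intro h
    apply hp
    rw [← leadingCoeff_eq_zero, ← hlc, h, leadingCoeff_zero]
  have hdeg : (p.comp (X + C 1)).degree = p.degree := by
    rw [degree_eq_natDegree hc0, degree_eq_natDegree hp, natDegree_comp, hnd, mul_one]
  have := Polynomial.degree_sub_lt hdeg hc0 hlc
  rwa [hdeg] at this

lemma fwdDiff_iter_poly_zero : ∀ (k : ℕ) (p : ℝ[X]), p.degree < k →
    (Δ_[(1:ℝ)])^[k] (fun y => p.eval y) = fun _ => 0 := by
  intro k
  induction k with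
  | zero =>
    intro p hp
    have hp0 : p = 0 := by
      by_contra h
      exact absurd (Polynomial.zero_le_degree_iff.mpr h) (by simpa using hp.not_ge)
    subst hp0
    simp
  | succ k ih =>
    intro p hp
    rw [Function.iterate_succ_apply, fwdDiff_poly_eval]
    by_cases h0 : p = 0
    · subst h0
      have := ih 0 (by rw [degree_zero]; exact_mod_cast bot_lt_iff_ne_bot.mpr (by simp)
        )
      simpa using this
    · apply ih
      have h1 := degree_comp_sub_lt p h0
      have h2 : p.degree ≤ (k : WithBot ℕ) := by
        rw [Polynomial.degree_eq_natDegree h0] at hp ⊢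
        exact_mod_cast Nat.lt_succ_iff.mp (by exact_mod_cast hp)
      exact h1.trans_le h2

lemma alt_sum_poly_eq_zero (k : ℕ) (p : ℝ[X]) (hp : p.degree < k) (x : ℝ) :
    ∑ j ∈ Finset.range (k + 1), (-1 : ℝ) ^ j * (Nat.choose k j : ℝ) * p.eval (x + j) = 0 := by
  have hiter := fwdDiff_iter_eq_sum_shift (1:ℝ) (fun y => p.eval y) k x
  rw [fwdDiff_iter_poly_zero k p hp] at hiter
  have : ∑ j ∈ Finset.range (k + 1), (-1 : ℝ) ^ j * (Nat.choose k j : ℝ) * p.eval (x + j)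
      = (-1:ℝ)^k * ∑ j ∈ Finset.range (k + 1),
          ((-1 : ℤ) ^ (k - j) * (Nat.choose k j : ℤ)) • p.eval (x + j • (1:ℝ)) := by
    rw [Finset.mul_sum]
    apply Finset.sum_congr rfl
    intro j hj
    have hj' : j ≤ k := Finset.mem_range_succ_iff.mp hj
    have hsign : ((-1:ℝ))^(k-j) * (-1)^j = (-1)^k := by
      rw [← pow_add, Nat.sub_add_cancel hj']
    have harg : (x + j • (1:ℝ)) = x + j := by simp
    have h2 : ((-1:ℝ))^(k-j) * (-1)^(k-j) = 1 := by
      rw [← pow_add]; exact Even.neg_one_pow ⟨k - j, rfl⟩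
    rw [harg, zsmul_eq_mul]
    push_cast
    linear_combination (((Nat.choose k j : ℝ)) * (Polynomial.eval (x + (j:ℝ)) p) * (-1:ℝ)^(k-j)) * hsign
      - (((Nat.choose k j : ℝ)) * (Polynomial.eval (x + (j:ℝ)) p) * (-1:ℝ)^j) * h2
  rw [this, ← hiter]
  ring

/-- the factorial-series transformation
`S_k⁽ⁿ⁾(ζ, sₙ, ωₙ) = [Σⱼ (-1)ʲ C(k,j) ((ζ+n+j)_{k-1}/(ζ+n+k)_{k-1}) s_{n+j}/ω_{n+j}] /
[Σⱼ (-1)ʲ C(k,j) ((ζ+n+j)_{k-1}/(ζ+n+k)_{k-1}) / ω_{n+j}]`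
(with `(x)_m` the Pochhammer symbol, `(x)_m = (ascPochhammer ℝ m).eval x`)
is exact for the model sequence `sₙ = s + ωₙ·Σ_{j=0}^{k-1} cⱼ/(n+ζ)_j`,
at every `n` where the denominator sum is nonzero. -/
theorem factorial_series_transformation_exact
    (ζ : ℝ) (hζ : 0 < ζ) (k : ℕ) (hk : 1 ≤ k)
    (s : ℝ) (c : ℕ → ℝ) (ω : ℕ → ℝ) (hω : ∀ n : ℕ, ω n ≠ 0)
    (sn : ℕ → ℝ)
    (hsn : ∀ n : ℕ, sn n = s + ω n *
      ∑ j ∈ Finset.range k, c j / (ascPochhammer ℝ j).eval ((n : ℝ) + ζ)) :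
    ∀ n : ℕ,
      (∑ j ∈ Finset.range (k + 1), (-1 : ℝ) ^ j * (Nat.choose k j : ℝ) *
        ((ascPochhammer ℝ (k - 1)).eval (ζ + n + j) /
          (ascPochhammer ℝ (k - 1)).eval (ζ + n + k)) / ω (n + j)) ≠ 0 →
      (∑ j ∈ Finset.range (k + 1), (-1 : ℝ) ^ j * (Nat.choose k j : ℝ) *
        ((ascPochhammer ℝ (k - 1)).eval (ζ + n + j) /
          (ascPochhammer ℝ (k - 1)).eval (ζ + n + k)) * (sn (n + j) / ω (n + j))) /
      (∑ j ∈ Finset.range (k + 1), (-1 : ℝ) ^ j * (Nat.choose k j : ℝ) *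
        ((ascPochhammer ℝ (k - 1)).eval (ζ + n + j) /
          (ascPochhammer ℝ (k - 1)).eval (ζ + n + k)) / ω (n + j)) = s := by
  intro n hden
  -- positivity of Pochhammer values
  have hx : ∀ j : ℕ, (0:ℝ) < ζ + n + j := by
    intro j
    have : (0:ℝ) ≤ (n:ℝ) + j := by positivity
    linarith
  have hPpos : ∀ (m j : ℕ), 0 < (ascPochhammer ℝ m).eval (ζ + n + j) :=
    fun m j => ascPochhammer_pos m _ (hx j)
  have hD : (ascPochhammer ℝ (k-1)).eval (ζ + n + k) ≠ 0 := (hPpos (k-1) k).ne'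
  -- the key factorization of Pochhammer ratios
  set Q : ℕ → ℝ[X] := fun m => (ascPochhammer ℝ (k-1-m)).comp (X + (m : ℝ[X])) with hQdef
  have hPQ : ∀ m : ℕ, m < k → ∀ j : ℕ,
      (ascPochhammer ℝ (k-1)).eval (ζ + n + j)
        = (ascPochhammer ℝ m).eval (ζ + n + j) * (Q m).eval (ζ + n + j) := by
    intro m hm j
    have h1 : m + (k - 1 - m) = k - 1 := by omega
    have := congrArg (Polynomial.eval (ζ + n + j))
      (ascPochhammer_mul (S := ℝ) m (k - 1 - m))
    rw [h1] at this
    rw [← this, Polynomial.eval_mul]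
  -- rewrite each numerator term
  have hterm : ∀ j ∈ Finset.range (k+1),
      (-1 : ℝ) ^ j * (Nat.choose k j : ℝ) *
        ((ascPochhammer ℝ (k - 1)).eval (ζ + n + j) /
          (ascPochhammer ℝ (k - 1)).eval (ζ + n + k)) * (sn (n + j) / ω (n + j))
      = s * ((-1 : ℝ) ^ j * (Nat.choose k j : ℝ) *
          ((ascPochhammer ℝ (k - 1)).eval (ζ + n + j) /
            (ascPochhammer ℝ (k - 1)).eval (ζ + n + k)) / ω (n + j))
        + ∑ m ∈ Finset.range k,
            (c m / (ascPochhammer ℝ (k - 1)).eval (ζ + n + k)) *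
              ((-1 : ℝ) ^ j * (Nat.choose k j : ℝ) * (Q m).eval (ζ + n + j)) := by
    intro j hj
    rw [hsn (n + j)]
    have hcast : ((n + j : ℕ) : ℝ) + ζ = ζ + n + j := by push_cast; ring
    rw [hcast]
    rw [add_div, mul_div_cancel_left₀ _ (hω (n+j)), mul_add, Finset.mul_sum]
    congr 1
    · ring
    · apply Finset.sum_congr rfl
      intro m hm
      have hm' : m < k := Finset.mem_range.mp hm
      have hPm : (ascPochhammer ℝ m).eval (ζ + n + j) ≠ 0 := (hPpos m j).ne'
      rw [hPQ m hm' j]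
      field_simp
  rw [Finset.sum_congr rfl hterm, Finset.sum_add_distrib, ← Finset.mul_sum,
    Finset.sum_comm]
  have hzero : ∀ m ∈ Finset.range k,
      ∑ j ∈ Finset.range (k+1),
        (c m / (ascPochhammer ℝ (k - 1)).eval (ζ + n + k)) *
          ((-1 : ℝ) ^ j * (Nat.choose k j : ℝ) * (Q m).eval (ζ + n + j)) = 0 := by
    intro m hm
    rw [← Finset.mul_sum]
    have hdeg : (Q m).degree < (k : WithBot ℕ) := by
      have h1 : (Q m).natDegree ≤ k - 1 - m := by
        rw [hQdef]
        simp only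
        rw [Polynomial.natDegree_comp]
        have : (X + (m : ℝ[X])).natDegree = 1 := by
          rw [← Polynomial.C_eq_natCast]
          exact Polynomial.natDegree_X_add_C _
        rw [this, mul_one, ascPochhammer_natDegree]
      have h2 : (Q m).degree ≤ ((k - 1 - m : ℕ) : WithBot ℕ) :=
        (Polynomial.degree_le_natDegree).trans (by exact_mod_cast h1)
      refine h2.trans_lt ?_
      exact_mod_cast (by omega : k - 1 - m < k)
    have := alt_sum_poly_eq_zero k (Q m) hdeg (ζ + n)
    rw [this, mul_zero]
  rw [Finset.sum_congr rfl hzero]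
  simp only [Finset.sum_const_zero, add_zero]
  exact mul_div_cancel_right₀ s hden
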